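/- Let K₁, …, K_m ⊆ ℝⁿ be closed sets, each having the SOSH property at x̄ ∈ K := ∩ K_l, and suppose {K_l} has linearly regular intersection at x̄. Assume additionally that for x ∈ K near x̄ the normal cone satisfies N_K(x) = Σ_l N_{K_l}(x). Then K has the SOSH property at x̄: there exist δ > 0 and M″ > 0 such that for all x ∈ B(x̄, δ) ∩ K and unit v ∈ N_K(x), ⟨v, x - x̄⟩ ≤ M″ ‖x - x̄‖². -/

import Mathlib

open scoped RealInnerProductSpace
open Metric Filter

/-- The regular (Fréchet) normal cone of `C` at `x`. -/
def regNormalCone {n : ℕ} (C : Set (EuclideanSpace ℝ (Fin n)))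
    (x : EuclideanSpace ℝ (Fin n)) : Set (EuclideanSpace ℝ (Fin n)) :=
  {v | ∀ ε > 0, ∃ δ > 0, ∀ y ∈ C, ‖y - x‖ < δ → ⟪v, y - x⟫ ≤ ε * ‖y - x‖}

/-- The limiting normal cone of `C` at `x`: limits of regular normals at points of `C`
converging to `x`. -/
def limNormalCone {n : ℕ} (C : Set (EuclideanSpace ℝ (Fin n)))
    (x : EuclideanSpace ℝ (Fin n)) : Set (EuclideanSpace ℝ (Fin n)) :=
  {v | ∃ xs vs : ℕ → EuclideanSpace ℝ (Fin n), (∀ i, xs i ∈ C) ∧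
    Tendsto xs atTop (nhds x) ∧ (∀ i, vs i ∈ regNormalCone C (xs i)) ∧
    Tendsto vs atTop (nhds v)}

lemma regNormalCone_smul {n : ℕ} {C : Set (EuclideanSpace ℝ (Fin n))}
    {x v : EuclideanSpace ℝ (Fin n)} {t : ℝ} (ht : 0 < t)
    (hv : v ∈ regNormalCone C x) : t • v ∈ regNormalCone C x := by
  intro ε hε
  obtain ⟨δ, hδ, h⟩ := hv (ε / t) (by positivity)
  refine ⟨δ, hδ, fun y hy hyd => ?_⟩
  have := h y hy hyd
  rw [real_inner_smul_left]
  calc t * ⟪v, y - x⟫ ≤ t * (ε / t * ‖y - x‖) := by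
        exact mul_le_mul_of_nonneg_left this ht.le
    _ = ε * ‖y - x‖ := by field_simp

lemma limNormalCone_smul {n : ℕ} {C : Set (EuclideanSpace ℝ (Fin n))}
    {x v : EuclideanSpace ℝ (Fin n)} {t : ℝ} (ht : 0 < t)
    (hv : v ∈ limNormalCone C x) : t • v ∈ limNormalCone C x := by
  obtain ⟨xs, vs, h1, h2, h3, h4⟩ := hv
  exact ⟨xs, fun i => t • vs i, h1, h2, fun i => regNormalCone_smul ht (h3 i),
    h4.const_smul t⟩

lemma limNormalCone_osc {n : ℕ} {C : Set (EuclideanSpace ℝ (Fin n))}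
    {x u : EuclideanSpace ℝ (Fin n)} (xs us : ℕ → EuclideanSpace ℝ (Fin n))
    (hx : Tendsto xs atTop (nhds x))
    (hus : ∀ k, us k ∈ limNormalCone C (xs k))
    (hu : Tendsto us atTop (nhds u)) : u ∈ limNormalCone C x := by
  have h : ∀ k : ℕ, ∃ y v : EuclideanSpace ℝ (Fin n), y ∈ C ∧
      dist y (xs k) < 1/(k+1) ∧ v ∈ regNormalCone C y ∧ dist v (us k) < 1/(k+1) := by
    intro k
    obtain ⟨ys, vs, hysC, hysT, hvsR, hvsT⟩ := hus k
    have hpos : (0:ℝ) < 1/(k+1) := by positivity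
    obtain ⟨N1, hN1⟩ := Metric.tendsto_atTop.mp hysT _ hpos
    obtain ⟨N2, hN2⟩ := Metric.tendsto_atTop.mp hvsT _ hpos
    exact ⟨ys (max N1 N2), vs (max N1 N2), hysC _, hN1 _ (le_max_left _ _), hvsR _,
      hN2 _ (le_max_right _ _)⟩
  choose y v hyC hyd hvR hvd using h
  have hinv : Tendsto (fun k : ℕ => 1/((k:ℝ)+1)) atTop (nhds 0) :=
    tendsto_one_div_add_atTop_nhds_zero_nat
  refine ⟨y, v, hyC, ?_, hvR, ?_⟩
  · rw [tendsto_iff_dist_tendsto_zero]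
    refine squeeze_zero (g := fun k : ℕ => 1/((k:ℝ)+1) + dist (xs k) x)
      (fun k => dist_nonneg) (fun k => (dist_triangle (y k) (xs k) x).trans
        (add_le_add_left (hyd k).le _)) ?_
    simpa using hinv.add (tendsto_iff_dist_tendsto_zero.mp hx)
  · rw [tendsto_iff_dist_tendsto_zero]
    refine squeeze_zero (g := fun k : ℕ => 1/((k:ℝ)+1) + dist (us k) u)
      (fun k => dist_nonneg) (fun k => (dist_triangle (v k) (us k) u).trans
        (add_le_add_left (hvd k).le _)) ?_
    simpa using hinv.add (tendsto_iff_dist_tendsto_zero.mp hu)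

lemma exists_pos_le_all {m : ℕ} (d : Fin m → ℝ) (hd : ∀ l, 0 < d l) :
    ∃ ε > 0, ∀ l, ε ≤ d l := by
  rcases isEmpty_or_nonempty (Fin m) with h | h
  · exact ⟨1, one_pos, fun l => (h.elim l)⟩
  · obtain ⟨l0, _, hl0⟩ := Finset.exists_min_image Finset.univ d
      ⟨h.some, Finset.mem_univ _⟩
    exact ⟨d l0, hd l0, fun l => hl0 l (Finset.mem_univ l)⟩

lemma linreg_bound {n m : ℕ} (K : Fin m → Set (EuclideanSpace ℝ (Fin n)))
    (xbar : EuclideanSpace ℝ (Fin n))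
    (hlinreg : ∀ v : Fin m → EuclideanSpace ℝ (Fin n),
      (∀ l, v l ∈ limNormalCone (K l) xbar) → (∑ l, v l) = 0 → ∀ l, v l = 0) :
    ∃ δ₁ > 0, ∃ c > 0, ∀ x ∈ closedBall xbar δ₁,
      ∀ w : Fin m → EuclideanSpace ℝ (Fin n),
      (∀ l, w l ∈ limNormalCone (K l) x) → c * ∑ l, ‖w l‖ ≤ ‖∑ l, w l‖ := by
  by_contra hcon
  push_neg at hcon
  have hpos : ∀ k : ℕ, (0:ℝ) < 1/(k+1) := fun k => by positivity
  have h : ∀ k : ℕ, ∃ x ∈ closedBall xbar (1/(k+1)),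
      ∃ w : Fin m → EuclideanSpace ℝ (Fin n),
      (∀ l, w l ∈ limNormalCone (K l) x) ∧ ‖∑ l, w l‖ < (1/(k+1)) * ∑ l, ‖w l‖ :=
    fun k => hcon _ (hpos k) _ (hpos k)
  choose x hxball w hw hlt using h
  set S : ℕ → ℝ := fun k => ∑ l, ‖w k l‖ with hS
  have hSpos : ∀ k, 0 < S k := by
    intro k
    by_contra hS0
    push_neg at hS0
    have h1 : (0:ℝ) ≤ ‖∑ l, w k l‖ := norm_nonneg _
    have h2 := hlt k
    nlinarith [hpos k]
  set u : ℕ → Fin m → EuclideanSpace ℝ (Fin n) :=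
    fun k l => (S k)⁻¹ • w k l with hu
  have humem : ∀ k l, u k l ∈ limNormalCone (K l) (x k) := fun k l =>
    limNormalCone_smul (inv_pos.mpr (hSpos k)) (hw k l)
  have husum : ∀ k, ∑ l, ‖u k l‖ = 1 := by
    intro k
    simp only [hu, norm_smul, Real.norm_eq_abs, abs_of_pos (inv_pos.mpr (hSpos k)),
      ← Finset.mul_sum]
    exact inv_mul_cancel₀ (hSpos k).ne'
  have husumlt : ∀ k, ‖∑ l, u k l‖ < 1/(k+1) := by
    intro k
    have : ∑ l, u k l = (S k)⁻¹ • ∑ l, w k l := by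
      rw [Finset.smul_sum]
    rw [this, norm_smul, Real.norm_eq_abs, abs_of_pos (inv_pos.mpr (hSpos k))]
    calc (S k)⁻¹ * ‖∑ l, w k l‖ < (S k)⁻¹ * ((1/(k+1)) * S k) := by
          exact mul_lt_mul_of_pos_left (hlt k) (inv_pos.mpr (hSpos k))
      _ = 1/(k+1) := by
          rw [← mul_assoc, mul_comm ((S k)⁻¹) _, mul_assoc,
            inv_mul_cancel₀ (hSpos k).ne', mul_one]
  -- bounded, extract convergent subsequence
  have hub : ∀ k, u k ∈ closedBall (0 : Fin m → EuclideanSpace ℝ (Fin n)) 1 := by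
    intro k
    rw [mem_closedBall, dist_zero_right, pi_norm_le_iff_of_nonneg zero_le_one]
    intro l
    rw [← husum k]
    exact Finset.single_le_sum (fun i _ => norm_nonneg _) (Finset.mem_univ l)
  obtain ⟨a, -, φ, hφ, hφT⟩ := tendsto_subseq_of_bounded
    (Metric.isBounded_closedBall (x := (0 : Fin m → EuclideanSpace ℝ (Fin n))) (r := 1)) hub
  have hφge : ∀ k, k ≤ φ k := fun k => hφ.le_apply
  have hinv : Tendsto (fun k : ℕ => 1/((k:ℝ)+1)) atTop (nhds 0) :=
    tendsto_one_div_add_atTop_nhds_zero_nat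
  have hcoord : ∀ l, Tendsto (fun k => u (φ k) l) atTop (nhds (a l)) := by
    intro l
    exact (tendsto_pi_nhds.mp hφT) l
  -- x ∘ φ → xbar
  have hxT : Tendsto (fun k => x (φ k)) atTop (nhds xbar) := by
    rw [tendsto_iff_dist_tendsto_zero]
    refine squeeze_zero (g := fun k : ℕ => 1/((k:ℝ)+1)) (fun k => dist_nonneg)
      (fun k => ?_) hinv
    have h1 : dist (x (φ k)) xbar ≤ 1/((φ k : ℝ)+1) := mem_closedBall.mp (hxball (φ k))
    refine h1.trans ?_
    apply one_div_le_one_div_of_le (by positivity)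
    have h2 : (k:ℝ) ≤ (φ k : ℝ) := Nat.cast_le.mpr (hφge k)
    linarith
  have haN : ∀ l, a l ∈ limNormalCone (K l) xbar := by
    intro l
    exact limNormalCone_osc (fun k => x (φ k)) (fun k => u (φ k) l) hxT
      (fun k => humem (φ k) l) (hcoord l)
  have hasum : ∑ l, a l = 0 := by
    have h1 : Tendsto (fun k => ∑ l, u (φ k) l) atTop (nhds (∑ l, a l)) :=
      tendsto_finset_sum _ (fun l _ => hcoord l)
    have h2 : Tendsto (fun k => ∑ l, u (φ k) l) atTop (nhds 0) := by
      rw [tendsto_iff_norm_sub_tendsto_zero]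
      refine squeeze_zero (g := fun k : ℕ => 1/((k:ℝ)+1)) (fun k => norm_nonneg _)
        (fun k => ?_) hinv
      rw [sub_zero]
      refine (husumlt (φ k)).le.trans ?_
      apply one_div_le_one_div_of_le (by positivity)
      have h2 : (k:ℝ) ≤ (φ k : ℝ) := Nat.cast_le.mpr (hφge k)
      linarith
    exact tendsto_nhds_unique h1 h2
  have hanorm : ∑ l, ‖a l‖ = 1 := by
    have h1 : Tendsto (fun k => ∑ l, ‖u (φ k) l‖) atTop (nhds (∑ l, ‖a l‖)) :=
      tendsto_finset_sum _ (fun l _ => (hcoord l).norm)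
    have h2 : Tendsto (fun k => ∑ l, ‖u (φ k) l‖) atTop (nhds 1) := by
      simp only [husum]
      exact tendsto_const_nhds
    exact tendsto_nhds_unique h1 h2
  have := hlinreg a haN hasum
  rw [Finset.sum_congr rfl (fun l _ => by rw [this l, norm_zero])] at hanorm
  simp at hanorm

/-- SOSH under intersection: if each `K_l` is SOSH at `x̄ ∈ K = ⋂ K_l`, the sets have
linearly regular intersection at `x̄`, and the normal cone of `K` near `x̄` is the sum of
the normal cones of the `K_l`, then `K` is SOSH at `x̄`. -/
theorem SOSH_intersection {n m : ℕ}
    (K : Fin m → Set (EuclideanSpace ℝ (Fin n))) (hK : ∀ l, IsClosed (K l))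
    (xbar : EuclideanSpace ℝ (Fin n)) (hxbar : xbar ∈ ⋂ l, K l)
    (hSOSH : ∀ l, ∃ δ > 0, ∃ M > 0, ∀ x ∈ closedBall xbar δ ∩ K l,
      ∀ v ∈ limNormalCone (K l) x, ⟪v, x - xbar⟫ ≤ M * ‖v‖ * ‖x - xbar‖ ^ 2)
    (hlinreg : ∀ v : Fin m → EuclideanSpace ℝ (Fin n),
      (∀ l, v l ∈ limNormalCone (K l) xbar) → (∑ l, v l) = 0 → ∀ l, v l = 0)
    (hsum : ∃ δ₀ > 0, ∀ x ∈ closedBall xbar δ₀ ∩ ⋂ l, K l,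
      limNormalCone (⋂ l, K l) x =
        {v | ∃ w : Fin m → EuclideanSpace ℝ (Fin n),
          (∀ l, w l ∈ limNormalCone (K l) x) ∧ v = ∑ l, w l}) :
    ∃ δ > 0, ∃ M'' > 0, ∀ x ∈ closedBall xbar δ ∩ ⋂ l, K l,
      ∀ v ∈ limNormalCone (⋂ l, K l) x, ‖v‖ = 1 →
        ⟪v, x - xbar⟫ ≤ M'' * ‖x - xbar‖ ^ 2 := by
  obtain ⟨δ₀, hδ₀pos, hδ₀⟩ := hsum
  choose d hd M hM hP using hSOSH
  obtain ⟨ε, hεpos, hεle⟩ := exists_pos_le_all d hd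
  obtain ⟨δ₁, hδ₁pos, c, hcpos, hB⟩ := linreg_bound K xbar hlinreg
  have hMsum : (0:ℝ) ≤ ∑ l, M l := Finset.sum_nonneg fun l _ => (hM l).le
  refine ⟨min δ₀ (min δ₁ ε), by positivity, ((∑ l, M l) + 1)/c,
    div_pos (by linarith) hcpos, ?_⟩
  rintro x ⟨hxb, hxK⟩ v hv hv1
  have hxb₀ : x ∈ closedBall xbar δ₀ :=
    closedBall_subset_closedBall (min_le_left _ _) hxb
  have hxb₁ : x ∈ closedBall xbar δ₁ :=
    closedBall_subset_closedBall ((min_le_right _ _).trans (min_le_left _ _)) hxb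
  rw [hδ₀ x ⟨hxb₀, hxK⟩] at hv
  obtain ⟨w, hw, hveq⟩ := hv
  have hSle : ∑ l, ‖w l‖ ≤ 1/c := by
    have h1 := hB x hxb₁ w hw
    rw [← hveq, hv1] at h1
    rw [le_div_iff₀ hcpos]
    linarith
  have hx2 : (0:ℝ) ≤ ‖x - xbar‖^2 := sq_nonneg _
  have hwsum : (0:ℝ) ≤ ∑ l, ‖w l‖ := Finset.sum_nonneg fun l _ => norm_nonneg _
  calc ⟪v, x - xbar⟫ = ∑ l, ⟪w l, x - xbar⟫ := by rw [hveq, sum_inner]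
    _ ≤ ∑ l, M l * ‖w l‖ * ‖x - xbar‖^2 := by
        refine Finset.sum_le_sum (fun l _ => ?_)
        refine hP l x ⟨closedBall_subset_closedBall
          ((min_le_right _ _).trans ((min_le_right _ _).trans (hεle l))) hxb,
          Set.mem_iInter.mp hxK l⟩ (w l) (hw l)
    _ = (∑ l, M l * ‖w l‖) * ‖x - xbar‖^2 := by rw [Finset.sum_mul]
    _ ≤ ((∑ l, M l) * (∑ l, ‖w l‖)) * ‖x - xbar‖^2 := by
        refine mul_le_mul_of_nonneg_right ?_ hx2
        rw [Finset.sum_mul]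
        refine Finset.sum_le_sum (fun l _ => ?_)
        refine mul_le_mul_of_nonneg_left ?_ (hM l).le
        exact Finset.single_le_sum (fun i _ => norm_nonneg _) (Finset.mem_univ l)
    _ ≤ (((∑ l, M l) + 1)/c) * ‖x - xbar‖^2 := by
        refine mul_le_mul_of_nonneg_right ?_ hx2
        calc (∑ l, M l) * (∑ l, ‖w l‖) ≤ (∑ l, M l) * (1/c) :=
              mul_le_mul_of_nonneg_left hSle hMsum
          _ ≤ ((∑ l, M l) + 1)/c := by
              rw [mul_one_div, div_le_div_iff₀ hcpos hcpos]
              nlinarith
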